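/- Let U and V be independent real-valued random variables with true AUC θ* = P(U > V). For each m, n let U_1,…,U_m and V_1,…,V_n be i.i.d. copies of U and V respectively, all mutually independent, let θ̂_{m,n} = (mn)^{-1} Σ_{i=1}^m Σ_{j=1}^n 1(U_i > V_j), and let Π_{m,n} be the Gibbs posterior with flat prior and learning-rate sequence ω_n > 0, i.e. the probability measure on [0,1] with density proportional to θ ↦ exp(−ω_n m n (θ − θ̂_{m,n})²). Assume without loss of generality n = m ∧ n, that m, n → ∞, and that ω_n (m ∨ n) → ∞ (i.e. ω_n vanishes more slowly than (m ∨ n)^{-1}). Then for any sequence K_n → ∞, Π_{m,n}({θ ∈ [0,1] : |θ − θ*| > K_n (m ∧ n)^{-1/2}}) converges to 0 in P-probability as n → ∞. -/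

import Mathlib

open MeasureTheory ProbabilityTheory Finset Filter Set

lemma auxGibbsBound (σ r t θs : ℝ) (hσ : 4 ≤ σ) (hr : 0 < r)
    (ht : t ∈ Icc (0:ℝ) 1) (hclose : |t - θs| ≤ r / 2) :
    (∫ θ in Icc (0:ℝ) 1 ∩ {θ : ℝ | |θ - θs| > r}, Real.exp (-(σ * (θ - t) ^ 2))) /
      (∫ θ in Icc (0:ℝ) 1, Real.exp (-(σ * (θ - t) ^ 2))) ≤
    Real.exp 1 * Real.sqrt (2 * Real.pi) * Real.exp (-(σ * r ^ 2 / 8)) := by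
  have hσ0 : (0:ℝ) < σ := by linarith
  have hsq : (2:ℝ) ≤ Real.sqrt σ := by
    have : Real.sqrt 4 ≤ Real.sqrt σ := Real.sqrt_le_sqrt hσ
    nlinarith [Real.sq_sqrt (by norm_num : (0:ℝ) ≤ 4), Real.sqrt_nonneg (4:ℝ),
      Real.sq_sqrt hσ0.le, Real.sqrt_nonneg σ]
  have hsq0 : (0:ℝ) < Real.sqrt σ := by linarith
  set δ : ℝ := 1 / Real.sqrt σ with hδ
  have hδ0 : 0 < δ := by positivity
  have hδhalf : δ ≤ 1 / 2 := by
    rw [hδ, div_le_div_iff₀ hsq0 (by norm_num)]; linarith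
  have hfc : Continuous fun θ : ℝ => Real.exp (-(σ * (θ - t) ^ 2)) := by continuity
  have hfint : IntegrableOn (fun θ : ℝ => Real.exp (-(σ * (θ - t) ^ 2))) (Icc (0:ℝ) 1) := by
    exact hfc.integrableOn_Icc
  -- denominator lower bound
  obtain ⟨a, ha1, ha2⟩ : ∃ a : ℝ, Icc a (a + δ) ⊆ Icc (0:ℝ) 1 ∧ ∀ θ ∈ Icc a (a+δ), (θ - t)^2 ≤ δ^2 := by
    rcases le_or_gt t (1/2) with h | h
    · refine ⟨t, ?_, ?_⟩
      · intro θ hθ; exact ⟨le_trans ht.1 hθ.1, by linarith [hθ.2]⟩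
      · intro θ hθ; nlinarith [hθ.1, hθ.2]
    · refine ⟨t - δ, ?_, ?_⟩
      · intro θ hθ
        constructor
        · have := hθ.1; linarith
        · have := hθ.2; have := ht.2; linarith
      · intro θ hθ; have h1 := hθ.1; have h2 := hθ.2; nlinarith
  have hden : Real.exp (-1) * δ ≤ ∫ θ in Icc (0:ℝ) 1, Real.exp (-(σ * (θ - t) ^ 2)) := by
    have hsmall : Real.exp (-1) * (volume (Icc a (a + δ))).toReal ≤
        ∫ θ in Icc a (a + δ), Real.exp (-(σ * (θ - t) ^ 2)) := by
      apply setIntegral_ge_of_const_le_real measurableSet_Icc measure_Icc_lt_top.ne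
      · intro x hx
        rw [Real.exp_le_exp]
        have h1 : (x - t)^2 ≤ δ^2 := ha2 x hx
        have h2 : σ * (x - t)^2 ≤ σ * δ^2 := by nlinarith
        have h3 : σ * δ^2 = 1 := by
          have hh : Real.sqrt σ ^ 2 = σ := Real.sq_sqrt hσ0.le
          rw [hδ, div_pow, one_pow, hh]; field_simp
        linarith
      · exact hfint.mono_set ha1
    have hvol : (volume (Icc a (a + δ))).toReal = δ := by
      rw [Real.volume_Icc]; simp [ENNReal.toReal_ofReal hδ0.le]
    rw [hvol] at hsmall
    refine le_trans hsmall (setIntegral_mono_set hfint ?_ (HasSubset.Subset.eventuallyLE ha1))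
    · filter_upwards with x using (Real.exp_pos _).le
  -- numerator upper bound
  set A : Set ℝ := Icc (0:ℝ) 1 ∩ {θ : ℝ | |θ - θs| > r} with hA
  have hAmeas : MeasurableSet A :=
    measurableSet_Icc.inter
      (measurableSet_lt measurable_const ((continuous_abs.comp
        (continuous_id.sub continuous_const)).measurable))
  have hgpos : (0:ℝ) < σ / 2 := by linarith
  have hgint : Integrable (fun θ : ℝ => Real.exp (-(σ/2) * (θ - t) ^ 2)) := by
    have := integrable_exp_neg_mul_sq hgpos
    exact this.comp_sub_right t
  have hgint2 : Integrable
      (fun θ : ℝ => Real.exp (-(σ * r ^ 2 / 8)) * Real.exp (-(σ/2) * (θ - t) ^ 2)) :=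
    hgint.const_mul _
  have hnum : (∫ θ in A, Real.exp (-(σ * (θ - t) ^ 2))) ≤
      Real.exp (-(σ * r ^ 2 / 8)) * (Real.sqrt (2 * Real.pi) / Real.sqrt σ) := by
    have hAbd : ∀ θ ∈ A, Real.exp (-(σ * (θ - t) ^ 2)) ≤
        Real.exp (-(σ * r ^ 2 / 8)) * Real.exp (-(σ/2) * (θ - t) ^ 2) := by
      intro θ hθ
      have h1 : r < |θ - θs| := hθ.2
      have htri : |θ - θs| ≤ |θ - t| + |t - θs| := abs_sub_le θ t θs
      have h2 : r / 2 ≤ |θ - t| := by linarith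
      have h3 : r ^ 2 / 4 ≤ (θ - t) ^ 2 := by
        nlinarith [abs_nonneg (θ - t), sq_abs (θ - t)]
      rw [← Real.exp_add, Real.exp_le_exp]
      nlinarith
    calc (∫ θ in A, Real.exp (-(σ * (θ - t) ^ 2)))
        ≤ ∫ θ in A, Real.exp (-(σ * r ^ 2 / 8)) * Real.exp (-(σ/2) * (θ - t) ^ 2) := by
          refine setIntegral_mono_on (hfint.mono_set inter_subset_left)
            (hgint2.integrableOn) hAmeas hAbd
      _ ≤ ∫ θ : ℝ, Real.exp (-(σ * r ^ 2 / 8)) * Real.exp (-(σ/2) * (θ - t) ^ 2) := by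
          refine setIntegral_le_integral hgint2 ?_
          filter_upwards with x using by positivity
      _ = Real.exp (-(σ * r ^ 2 / 8)) * ∫ θ : ℝ, Real.exp (-(σ/2) * (θ - t) ^ 2) := by
          rw [integral_const_mul]
      _ = Real.exp (-(σ * r ^ 2 / 8)) * (Real.sqrt (2 * Real.pi) / Real.sqrt σ) := by
          congr 1
          have hsub : (∫ θ : ℝ, Real.exp (-(σ/2) * (θ - t) ^ 2)) =
              ∫ x : ℝ, Real.exp (-(σ/2) * x ^ 2) := by
            exact integral_sub_right_eq_self (fun x => Real.exp (-(σ/2) * x ^ 2)) t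
          rw [hsub, integral_gaussian]
          rw [show Real.pi / (σ/2) = 2 * Real.pi / σ by ring,
            Real.sqrt_div' ..]
          exact hσ0.le
  -- conclude
  have hnum0 : 0 ≤ ∫ θ in A, Real.exp (-(σ * (θ - t) ^ 2)) :=
    setIntegral_nonneg hAmeas fun x _ => (Real.exp_pos _).le
  have hden0 : (0:ℝ) < Real.exp (-1) * δ := by positivity
  calc (∫ θ in A, Real.exp (-(σ * (θ - t) ^ 2))) /
        (∫ θ in Icc (0:ℝ) 1, Real.exp (-(σ * (θ - t) ^ 2)))
      ≤ (Real.exp (-(σ * r ^ 2 / 8)) * (Real.sqrt (2 * Real.pi) / Real.sqrt σ)) /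
        (Real.exp (-1) * δ) := by
        apply div_le_div₀ (by positivity) hnum hden0 hden
    _ = Real.exp 1 * Real.sqrt (2 * Real.pi) * Real.exp (-(σ * r ^ 2 / 8)) := by
        rw [hδ, Real.exp_neg]
        field_simp
        have he : Real.exp 1 * Real.exp (-1) = 1 := by
          rw [← Real.exp_add]; norm_num
        linear_combination (-1 : ℝ) * he



lemma auxVar {Ω : Type*} [MeasurableSpace Ω] (P : Measure Ω) [IsProbabilityMeasure P]
    (U V : ℕ → Ω → ℝ)
    (hU : ∀ i, Measurable (U i)) (hV : ∀ j, Measurable (V j))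
    (hUid : ∀ i, IdentDistrib (U i) (U 0) P P)
    (hVid : ∀ j, IdentDistrib (V j) (V 0) P P)
    (hindep : iIndepFun (Sum.elim U V) P)
    (θstar : ℝ) (hθstar : θstar = (P {x | U 0 x > V 0 x}).toReal)
    (M N : ℕ) (hM : 0 < M) (hN : 0 < N) :
    ∫ x, ((1 / (M * N : ℝ)) * (∑ i ∈ range M, ∑ j ∈ range N,
        (if U i x > V j x then (1:ℝ) else 0)) - θstar) ^ 2 ∂P ≤ 1 / (M:ℝ) + 1 / (N:ℝ) := by
  classical
  have hmeas : ∀ k : ℕ ⊕ ℕ, Measurable (Sum.elim U V k) := by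
    rintro (i | j); exacts [hU i, hV j]
  set φ : ℝ × ℝ → ℝ := fun p => (if p.2 < p.1 then (1:ℝ) else 0) - θstar with hφ
  have hφm : Measurable φ :=
    (Measurable.ite (measurableSet_lt measurable_snd measurable_fst)
      measurable_const measurable_const).sub measurable_const
  set Y : ℕ → ℕ → Ω → ℝ := fun i j x => (if U i x > V j x then (1:ℝ) else 0) - θstar with hY
  have hYeq : ∀ i j, Y i j = φ ∘ (fun x => (U i x, V j x)) := by
    intro i j; funext x; simp [hY, hφ, gt_iff_lt]
  have hYm : ∀ i j, Measurable (Y i j) := fun i j => by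
    rw [hYeq]; exact hφm.comp ((hU i).prodMk (hV j))
  have hθ0 : 0 ≤ θstar := hθstar ▸ ENNReal.toReal_nonneg
  have hθ1 : θstar ≤ 1 := by
    rw [hθstar]
    have h1 : P {x | U 0 x > V 0 x} ≤ 1 := prob_le_one
    simpa using ENNReal.toReal_mono ENNReal.one_ne_top h1
  have hYbd : ∀ i j x, |Y i j x| ≤ 1 := by
    intro i j x
    simp only [hY]
    by_cases h : U i x > V j x <;> simp [h, abs_le] <;> constructor <;> linarith
  have hYint : ∀ i j, Integrable (Y i j) P := fun i j =>
    Integrable.mono' (integrable_const 1) (hYm i j).aestronglyMeasurable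
      (ae_of_all _ fun x => by simpa [Real.norm_eq_abs] using hYbd i j x)
  -- identical distribution of pairs
  have hpair : ∀ i j, Measure.map (fun x => (U i x, V j x)) P =
      Measure.map (fun x => (U 0 x, V 0 x)) P := by
    intro i j
    have hij : IndepFun (U i) (V j) P :=
      hindep.indepFun (show (Sum.inl i : ℕ ⊕ ℕ) ≠ Sum.inr j by simp)
    have h0 : IndepFun (U 0) (V 0) P :=
      hindep.indepFun (show (Sum.inl 0 : ℕ ⊕ ℕ) ≠ Sum.inr 0 by simp)
    rw [(indepFun_iff_map_prod_eq_prod_map_map (hU i).aemeasurable (hV j).aemeasurable).mp hij,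
      (indepFun_iff_map_prod_eq_prod_map_map (hU 0).aemeasurable (hV 0).aemeasurable).mp h0,
      (hUid i).map_eq, (hVid j).map_eq]
  have hprob : ∀ i j, P {x | U i x > V j x} = P {x | U 0 x > V 0 x} := by
    intro i j
    have hs : MeasurableSet {p : ℝ × ℝ | p.2 < p.1} :=
      measurableSet_lt measurable_snd measurable_fst
    have e1 : {x | U i x > V j x} = (fun x => (U i x, V j x)) ⁻¹' {p : ℝ × ℝ | p.2 < p.1} := rfl
    have e0 : {x | U 0 x > V 0 x} = (fun x => (U 0 x, V 0 x)) ⁻¹' {p : ℝ × ℝ | p.2 < p.1} := rfl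
    rw [e1, e0, ← Measure.map_apply ((hU i).prodMk (hV j)) hs,
      ← Measure.map_apply ((hU 0).prodMk (hV 0)) hs, hpair i j]
  have hmean : ∀ i j, ∫ x, Y i j x ∂P = 0 := by
    intro i j
    have hindint : Integrable (fun x => if U i x > V j x then (1:ℝ) else 0) P := by
      refine Integrable.mono' (integrable_const 1) ?_ (ae_of_all _ fun x => ?_)
      · exact (Measurable.ite (measurableSet_lt (hV j) (hU i))
          measurable_const measurable_const).aestronglyMeasurable
      · by_cases h : U i x > V j x <;> simp [h]
    have hind : ∫ x, (if U i x > V j x then (1:ℝ) else 0) ∂P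
        = (P {x | U i x > V j x}).toReal := by
      have e : (fun x => if U i x > V j x then (1:ℝ) else 0)
          = Set.indicator {x | U i x > V j x} (fun _ => (1:ℝ)) := by
        funext x; simp [Set.indicator_apply, Set.mem_setOf_eq]
      rw [e, integral_indicator_const _ (measurableSet_lt (hV j) (hU i))]
      simp
      rfl
    have : ∫ x, Y i j x ∂P
        = (∫ x, (if U i x > V j x then (1:ℝ) else 0) ∂P) - θstar := by
      simp only [hY]
      rw [integral_sub hindint (integrable_const θstar), integral_const]
      simp
    rw [this, hind, hprob i j, ← hθstar]
    ring
  -- products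
  have hprodint : ∀ i j k l, Integrable (fun x => Y i j x * Y k l x) P := by
    intro i j k l
    refine Integrable.mono' (integrable_const 1)
      ((hYm i j).mul (hYm k l)).aestronglyMeasurable (ae_of_all _ fun x => ?_)
    rw [Real.norm_eq_abs, abs_mul]
    exact mul_le_one₀ (hYbd i j x) (abs_nonneg _) (hYbd k l x)
  have hbd1 : ∀ i j k l, ∫ x, Y i j x * Y k l x ∂P ≤ 1 := by
    intro i j k l
    calc ∫ x, Y i j x * Y k l x ∂P ≤ ∫ _x, (1:ℝ) ∂P := by
          refine integral_mono (hprodint i j k l) (integrable_const 1) fun x => ?_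
          calc Y i j x * Y k l x ≤ |Y i j x * Y k l x| := le_abs_self _
            _ = |Y i j x| * |Y k l x| := abs_mul _ _
            _ ≤ 1 := mul_le_one₀ (hYbd i j x) (abs_nonneg _) (hYbd k l x)
      _ = 1 := by simp
  have hzero : ∀ i j k l, i ≠ k → j ≠ l → ∫ x, Y i j x * Y k l x ∂P = 0 := by
    intro i j k l hik hjl
    have hpp : IndepFun (fun x => (U i x, V j x)) (fun x => (U k x, V l x)) P :=
      hindep.indepFun_prodMk_prodMk hmeas (Sum.inl i) (Sum.inr j) (Sum.inl k) (Sum.inr l)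
        (by simp [hik]) (by simp) (by simp) (by simp [hjl])
    have hYY : IndepFun (Y i j) (Y k l) P := by
      rw [hYeq i j, hYeq k l]; exact hpp.comp hφm hφm
    have h := hYY.integral_mul_eq_mul_integral (hYm i j).aestronglyMeasurable (hYm k l).aestronglyMeasurable
    calc ∫ x, Y i j x * Y k l x ∂P = integral P (Y i j * Y k l) := rfl
      _ = 0 := by rw [h, hmean i j, hmean k l, mul_zero]
  -- main computation
  have hMR : (0:ℝ) < (M:ℝ) := Nat.cast_pos.mpr hM
  have hNR : (0:ℝ) < (N:ℝ) := Nat.cast_pos.mpr hN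
  set c : ℝ := 1 / ((M:ℝ) * (N:ℝ)) with hc
  set Q : Finset (ℕ × ℕ) := range M ×ˢ range N with hQ
  have hDrw : ∀ x, (1 / (M * N : ℝ)) * (∑ i ∈ range M, ∑ j ∈ range N,
      (if U i x > V j x then (1:ℝ) else 0)) - θstar = c * ∑ p ∈ Q, Y p.1 p.2 x := by
    intro x
    rw [hQ, Finset.sum_product]
    simp only [hY, Finset.sum_sub_distrib, Finset.sum_const, Finset.card_range, nsmul_eq_mul, hc]
    field_simp
  calc ∫ x, ((1 / (M * N : ℝ)) * (∑ i ∈ range M, ∑ j ∈ range N,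
        (if U i x > V j x then (1:ℝ) else 0)) - θstar) ^ 2 ∂P
      = ∫ x, c ^ 2 * ∑ p ∈ Q, ∑ q ∈ Q, Y p.1 p.2 x * Y q.1 q.2 x ∂P := by
        apply integral_congr_ae; filter_upwards with x
        rw [hDrw x, mul_pow, sq (∑ p ∈ Q, Y p.1 p.2 x), Finset.sum_mul_sum]
    _ = c ^ 2 * ∑ p ∈ Q, ∑ q ∈ Q, ∫ x, Y p.1 p.2 x * Y q.1 q.2 x ∂P := by
        rw [integral_const_mul]
        congr 1
        rw [integral_finset_sum _ fun p _ =>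
          integrable_finset_sum _ fun q _ => hprodint p.1 p.2 q.1 q.2]
        exact Finset.sum_congr rfl fun p _ =>
          integral_finset_sum _ fun q _ => hprodint p.1 p.2 q.1 q.2
    _ ≤ c ^ 2 * ∑ p ∈ Q, ∑ q ∈ Q,
        ((if p.1 = q.1 then (1:ℝ) else 0) + (if p.2 = q.2 then (1:ℝ) else 0)) := by
        refine mul_le_mul_of_nonneg_left ?_ (sq_nonneg c)
        refine Finset.sum_le_sum fun p _ => Finset.sum_le_sum fun q _ => ?_
        by_cases h1 : p.1 = q.1
        · have h3 : (0:ℝ) ≤ if p.2 = q.2 then (1:ℝ) else 0 := by positivity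
          rw [if_pos h1]
          linarith [hbd1 p.1 p.2 q.1 q.2]
        · by_cases h2 : p.2 = q.2
          · rw [if_neg h1, if_pos h2]
            linarith [hbd1 p.1 p.2 q.1 q.2]
          · rw [hzero _ _ _ _ h1 h2]
            simp [h1, h2]
    _ = c ^ 2 * ((M * N : ℝ) * ((N:ℝ) + (M:ℝ))) := by
        congr 1
        have hinner : ∀ p ∈ Q, (∑ q ∈ Q,
            ((if p.1 = q.1 then (1:ℝ) else 0) + (if p.2 = q.2 then (1:ℝ) else 0)))
            = (N:ℝ) + (M:ℝ) := by
          intro p hp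
          obtain ⟨hp1, hp2⟩ := Finset.mem_product.mp hp
          rw [Finset.sum_add_distrib]
          congr 1
          · rw [hQ, Finset.sum_product]
            have h5 : ∀ k, (∑ _l ∈ range N, (if p.1 = k then (1:ℝ) else 0))
                = (if p.1 = k then (N:ℝ) else 0) := by
              intro k; by_cases h : p.1 = k <;> simp [h]
            rw [Finset.sum_congr rfl fun k _ => h5 k, Finset.sum_ite_eq]
            simp [hp1]
          · rw [hQ, Finset.sum_product]
            have hin : (∑ l ∈ range N, (if p.2 = l then (1:ℝ) else 0)) = 1 := by
              rw [Finset.sum_ite_eq]; simp [hp2]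
            calc (∑ _k ∈ range M, ∑ l ∈ range N, (if p.2 = l then (1:ℝ) else 0))
                = ∑ _k ∈ range M, (1:ℝ) := Finset.sum_congr rfl fun k _ => hin
              _ = (M:ℝ) := by simp
        rw [Finset.sum_congr rfl hinner, Finset.sum_const, hQ, Finset.card_product]
        simp only [Finset.card_range, nsmul_eq_mul]
        push_cast; ring
    _ = 1 / (M:ℝ) + 1 / (N:ℝ) := by
        rw [hc]; field_simp


/-- Gibbs posterior concentration for the AUC with a vanishing
learning-rate sequence.  Let `U, V` be independent with true AUC
`θ* = P(U > V)`, `U₁,…,U_m` and `V₁,…,V_n` i.i.d. copies, mutually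
independent, `θ̂_{m,n}` the Mann–Whitney statistic, and `Π_{m,n}` the Gibbs
posterior on `[0,1]` with flat prior and learning rates `ω_n > 0`, i.e. with
density proportional to `θ ↦ exp(-ω_n m n (θ - θ̂_{m,n})²)`.  With `n = m ∧ n`
(i.e. `n ≤ m_n`), `m, n → ∞`, and `ω_n (m ∨ n) → ∞` (so `ω_n` vanishes more
slowly than `(m ∨ n)⁻¹`), for any sequence `K_n → ∞`, the random variable
`Π_{m,n}({θ ∈ [0,1] : |θ - θ*| > K_n (m ∧ n)^{-1/2}})` tends to `0` in
`P`-probability as `n → ∞`. -/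
theorem gibbs_posterior_auc_concentration_vanishing_rate
    {Ω : Type*} [MeasurableSpace Ω] (P : Measure Ω) [IsProbabilityMeasure P]
    (U V : ℕ → Ω → ℝ)
    (hU : ∀ i, Measurable (U i)) (hV : ∀ j, Measurable (V j))
    (hUid : ∀ i, IdentDistrib (U i) (U 0) P P)
    (hVid : ∀ j, IdentDistrib (V j) (V 0) P P)
    (hindep : iIndepFun (Sum.elim U V) P)
    (θstar : ℝ) (hθstar : θstar = (P {x | U 0 x > V 0 x}).toReal)
    (m : ℕ → ℕ) (hm : ∀ n, n ≤ m n)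
    (ω : ℕ → ℝ) (hω : ∀ n, 0 < ω n)
    (hrate : Tendsto (fun n => ω n * (max (m n) n : ℝ)) atTop atTop)
    (θhat : ℕ → Ω → ℝ)
    (hθhat : ∀ n x, θhat n x = (1 / (m n * n : ℝ)) *
      ∑ i ∈ range (m n), ∑ j ∈ range n, (if U i x > V j x then (1 : ℝ) else 0))
    (Gibbs : ℕ → ℝ → Set ℝ → ℝ)
    (hGibbs : ∀ (n : ℕ) (t : ℝ) (S : Set ℝ), Gibbs n t S =
      (∫ θ in Icc (0 : ℝ) 1 ∩ S, Real.exp (-(ω n * m n * n * (θ - t) ^ 2))) /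
      (∫ θ in Icc (0 : ℝ) 1, Real.exp (-(ω n * m n * n * (θ - t) ^ 2))))
    (K : ℕ → ℝ) (hK : Tendsto K atTop atTop) :
    ∀ ε > (0 : ℝ),
      Tendsto (fun n => P {x | ε ≤
          Gibbs n (θhat n x)
            {θ : ℝ | |θ - θstar| > K n / Real.sqrt (min (m n) n)}})
        atTop (nhds 0) := by
  intro ε hε
  have hθ0 : 0 ≤ θstar := hθstar ▸ ENNReal.toReal_nonneg
  have hθ1 : θstar ≤ 1 := by
    rw [hθstar]
    have h1 : P {x | U 0 x > V 0 x} ≤ 1 := prob_le_one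
    simpa using ENNReal.toReal_mono ENNReal.one_ne_top h1
  have hrate' : Tendsto (fun n => ω n * (m n : ℝ)) atTop atTop := by
    have he : (fun n => ω n * (max (m n) n : ℝ)) = fun n => ω n * (m n : ℝ) := by
      funext n; congr 1
      exact max_eq_left (by exact_mod_cast hm n)
    rwa [he] at hrate
  have hK2 : Tendsto (fun n => K n ^ 2) atTop atTop := by
    have := hK.atTop_mul_atTop₀ hK
    simpa [pow_two] using this
  have hexp : Tendsto (fun n => Real.exp 1 * Real.sqrt (2 * Real.pi) *
      Real.exp (-(ω n * m n * K n ^ 2 / 8))) atTop (nhds 0) := by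
    have h0 : Tendsto (fun n => ω n * m n * K n ^ 2) atTop atTop :=
      hrate'.atTop_mul_atTop₀ hK2
    have h1 : Tendsto (fun n => -(ω n * m n * K n ^ 2 / 8)) atTop atBot := by
      apply Filter.tendsto_neg_atBot_iff.mpr
      exact h0.atTop_div_const (by norm_num)
    have h2 := Real.tendsto_exp_atBot.comp h1
    have h3 := h2.const_mul (Real.exp 1 * Real.sqrt (2 * Real.pi))
    simpa using h3
  have h8K : Tendsto (fun n => ENNReal.ofReal (8 / K n ^ 2)) atTop (nhds 0) := by
    have h1 : Tendsto (fun n => 8 / K n ^ 2) atTop (nhds 0) :=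
      Tendsto.div_atTop tendsto_const_nhds hK2
    have := ENNReal.tendsto_ofReal h1
    simpa using this
  have hev : ∀ᶠ n in atTop, P {x | ε ≤ Gibbs n (θhat n x)
      {θ : ℝ | |θ - θstar| > K n / Real.sqrt (min (m n) n)}} ≤
      ENNReal.ofReal (8 / K n ^ 2) := by
    filter_upwards [eventually_ge_atTop 1, hrate'.eventually_ge_atTop 4,
      hK.eventually_gt_atTop 0, hexp.eventually_lt_const hε] with n hn1 hn4 hKpos hCε
    have hm1 : 1 ≤ m n := le_trans hn1 (hm n)
    have hnR : (0:ℝ) < (n:ℝ) := by exact_mod_cast hn1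
    have hnR1 : (1:ℝ) ≤ (n:ℝ) := by exact_mod_cast hn1
    have hmR : (0:ℝ) < ((m n : ℕ):ℝ) := by exact_mod_cast hm1
    set r : ℝ := K n / Real.sqrt (n:ℝ) with hrdef
    have hr : 0 < r := div_pos hKpos (Real.sqrt_pos.mpr hnR)
    have hr2 : r ^ 2 = K n ^ 2 / (n:ℝ) := by
      rw [hrdef, div_pow, Real.sq_sqrt hnR.le]
    have hσ4 : 4 ≤ ω n * m n * n := by
      nlinarith [hω n]
    have hminR : (min ((m n : ℕ):ℝ) ((n : ℕ):ℝ)) = ((n:ℕ):ℝ) :=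
      min_eq_right (by exact_mod_cast hm n)
    -- θhat properties
    have hθm : Measurable (θhat n) := by
      have he : θhat n = fun x => (1 / (m n * n : ℝ)) *
          ∑ i ∈ range (m n), ∑ j ∈ range n, (if U i x > V j x then (1 : ℝ) else 0) :=
        funext (hθhat n)
      rw [he]
      apply Measurable.const_mul
      apply Finset.measurable_sum
      intro i _
      apply Finset.measurable_sum
      intro j _
      exact Measurable.ite (measurableSet_lt (hV j) (hU i)) measurable_const measurable_const
    have hθ01 : ∀ x, 0 ≤ θhat n x ∧ θhat n x ≤ 1 := by
      intro x
      rw [hθhat]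
      have hpos : (0:ℝ) < ((m n : ℕ):ℝ) * ((n:ℕ):ℝ) := by positivity
      constructor
      · apply mul_nonneg (by positivity)
        exact Finset.sum_nonneg fun i _ => Finset.sum_nonneg fun j _ => by positivity
      · have hS : (∑ i ∈ range (m n), ∑ j ∈ range n,
            (if U i x > V j x then (1:ℝ) else 0)) ≤ ((m n : ℕ):ℝ) * ((n:ℕ):ℝ) := by
          calc (∑ i ∈ range (m n), ∑ j ∈ range n, (if U i x > V j x then (1:ℝ) else 0))
              ≤ ∑ i ∈ range (m n), ∑ j ∈ range n, (1:ℝ) := by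
                refine Finset.sum_le_sum fun i _ => Finset.sum_le_sum fun j _ => ?_
                split <;> norm_num
            _ = ((m n : ℕ):ℝ) * ((n:ℕ):ℝ) := by
                simp [mul_comm]
        have h2 := mul_le_mul_of_nonneg_left hS
          (by positivity : (0:ℝ) ≤ 1 / (((m n : ℕ):ℝ) * ((n:ℕ):ℝ)))
        calc (1 / ((m n : ℕ) * (n:ℕ) : ℝ)) * (∑ i ∈ range (m n), ∑ j ∈ range n,
              (if U i x > V j x then (1:ℝ) else 0))
            ≤ (1 / (((m n : ℕ):ℝ) * ((n:ℕ):ℝ))) * (((m n : ℕ):ℝ) * ((n:ℕ):ℝ)) := h2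
          _ = 1 := by field_simp
    have hDbd : ∀ x, |θhat n x - θstar| ≤ 1 := by
      intro x
      rw [abs_le]
      constructor <;> [linarith [(hθ01 x).1]; linarith [(hθ01 x).2]]
    -- Chebyshev
    have hvar := auxVar P U V hU hV hUid hVid hindep θstar hθstar (m n) n
      (lt_of_lt_of_le one_pos hm1) (lt_of_lt_of_le one_pos hn1)
    have hvar1 : ∫ x, (θhat n x - θstar) ^ 2 ∂P ≤ 1 / ((m n : ℕ):ℝ) + 1 / ((n:ℕ):ℝ) := by
      have he : (fun x => (θhat n x - θstar) ^ 2) = fun x => ((1 / (m n * n : ℝ)) *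
          (∑ i ∈ range (m n), ∑ j ∈ range n, (if U i x > V j x then (1:ℝ) else 0))
          - θstar) ^ 2 := by
        funext x; rw [hθhat]
      rw [he]
      exact hvar
    have hvar2 : ∫ x, (θhat n x - θstar) ^ 2 ∂P ≤ 2 / ((n:ℕ):ℝ) := by
      have h1 : 1 / ((m n : ℕ):ℝ) ≤ 1 / ((n:ℕ):ℝ) :=
        one_div_le_one_div_of_le hnR (by exact_mod_cast hm n)
      calc ∫ x, (θhat n x - θstar) ^ 2 ∂P ≤ 1 / ((m n : ℕ):ℝ) + 1 / ((n:ℕ):ℝ) := hvar1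
        _ ≤ 2 / ((n:ℕ):ℝ) := by
          have h2 : 2 / ((n:ℕ):ℝ) = 1/((n:ℕ):ℝ) + 1/((n:ℕ):ℝ) := by ring
          rw [h2]; linarith

    have hfm : Measurable fun x => (θhat n x - θstar) ^ 2 :=
      (hθm.sub measurable_const).pow_const 2
    have hfint : Integrable (fun x => (θhat n x - θstar) ^ 2) P := by
      refine Integrable.mono' (integrable_const 1) hfm.aestronglyMeasurable
        (ae_of_all _ fun x => ?_)
      rw [Real.norm_eq_abs, abs_of_nonneg (sq_nonneg _)]
      nlinarith [hDbd x, abs_nonneg (θhat n x - θstar), sq_abs (θhat n x - θstar)]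
    set a : ℝ := (r / 2) ^ 2 with ha
    have ha0 : 0 < a := by positivity
    have hcheb : P {x | a ≤ (θhat n x - θstar) ^ 2} ≤ ENNReal.ofReal (8 / K n ^ 2) := by
      have hlin : ∫⁻ x, ENNReal.ofReal ((θhat n x - θstar) ^ 2) ∂P =
          ENNReal.ofReal (∫ x, (θhat n x - θstar) ^ 2 ∂P) :=
        (ofReal_integral_eq_lintegral_ofReal hfint (ae_of_all _ fun x => sq_nonneg _)).symm
      have hmk := mul_meas_ge_le_lintegral₀ (μ := P)
        (hfm.ennreal_ofReal.aemeasurable) (ENNReal.ofReal a)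
      have hset : {x | ENNReal.ofReal a ≤ ENNReal.ofReal ((θhat n x - θstar) ^ 2)} =
          {x | a ≤ (θhat n x - θstar) ^ 2} := by
        ext x; simp [ENNReal.ofReal_le_ofReal_iff (sq_nonneg _)]
      rw [hset, hlin] at hmk
      have hP : P {x | a ≤ (θhat n x - θstar) ^ 2} ≤
          ENNReal.ofReal (∫ x, (θhat n x - θstar) ^ 2 ∂P) / ENNReal.ofReal a := by
        rw [ENNReal.le_div_iff_mul_le
          (Or.inl (ne_of_gt (ENNReal.ofReal_pos.mpr ha0))) (Or.inl ENNReal.ofReal_ne_top)]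
        rw [mul_comm]; exact hmk
      refine le_trans hP (le_trans (ENNReal.div_le_div_right
        (ENNReal.ofReal_le_ofReal hvar2) _) (le_of_eq ?_))
      rw [← ENNReal.ofReal_div_of_pos ha0]
      congr 1
      rw [ha, div_pow, hr2]
      field_simp
      ring
    -- the subset
    have hsub : {x | ε ≤ Gibbs n (θhat n x)
        {θ : ℝ | |θ - θstar| > K n / Real.sqrt (min (m n) n)}} ⊆
        {x | a ≤ (θhat n x - θstar) ^ 2} := by
      intro x hx
      simp only [Set.mem_setOf_eq] at hx ⊢
      by_contra hcon
      have hcon2 : (θhat n x - θstar) ^ 2 ≤ (r / 2) ^ 2 := le_of_lt (by rw [← ha]; exact lt_of_not_ge hcon)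
      have habs : |θhat n x - θstar| ≤ r / 2 := by
        have h1 : |θhat n x - θstar| = Real.sqrt ((θhat n x - θstar) ^ 2) :=
          (Real.sqrt_sq_eq_abs _).symm
        rw [h1]
        calc Real.sqrt ((θhat n x - θstar) ^ 2) ≤ Real.sqrt ((r / 2) ^ 2) :=
              Real.sqrt_le_sqrt hcon2
          _ = r / 2 := Real.sqrt_sq (by positivity)
      have hGb := auxGibbsBound (ω n * m n * n) r (θhat n x) θstar hσ4 hr
        ⟨(hθ01 x).1, (hθ01 x).2⟩ habs
      have hsetEq : {θ : ℝ | |θ - θstar| > K n / Real.sqrt (min (m n) n)} =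
          {θ : ℝ | |θ - θstar| > r} := by
        rw [hrdef, hminR]
      rw [hsetEq, hGibbs] at hx
      have hσr : ω n * m n * n * r ^ 2 = ω n * m n * K n ^ 2 := by
        rw [hr2]; field_simp
      rw [show -(ω n * m n * n * r ^ 2 / 8) = -(ω n * m n * K n ^ 2 / 8) by rw [hσr]] at hGb
      linarith
    exact le_trans (measure_mono hsub) hcheb
  refine tendsto_of_tendsto_of_tendsto_of_le_of_le' tendsto_const_nhds h8K
    (Filter.Eventually.of_forall fun n => zero_le) hev
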